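/- Let b > 0, z > 0 be real and ν < 0 be real with Φ(ν,b,z) = 0. Then ∫₀^z t^{b-1} e^{-t} Φ²(ν,b,t) dt ≥ (2ν² e^{-z} z^{b+1} / (b²(b − 2ν))) · Φ²(ν+1, b+1, z). -/

import Mathlib

open Real

/-- The confluent hypergeometric function of the first kind
`Φ(a,b,z) = Σ_{n≥0} (a)_n / ((b)_n n!) z^n`. -/
noncomputable def Phi (a b z : ℝ) : ℝ :=
  ∑' n : ℕ, ((ascPochhammer ℝ n).eval a / ((ascPochhammer ℝ n).eval b * (n.factorial : ℝ))) * z ^ n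

namespace PhiAux

/-- The coefficients of `Phi`. -/
noncomputable def pc (a b : ℝ) (n : ℕ) : ℝ :=
  (ascPochhammer ℝ n).eval a / ((ascPochhammer ℝ n).eval b * (n.factorial : ℝ))

lemma Phi_eq (a b z : ℝ) : Phi a b z = ∑' n : ℕ, pc a b n * z ^ n := rfl

lemma asc_pos {b : ℝ} (hb : 0 < b) (n : ℕ) : 0 < (ascPochhammer ℝ n).eval b := by
  induction n with
  | zero => simp [ascPochhammer_zero]
  | succ n ih =>
      rw [ascPochhammer_succ_right]
      simp only [Polynomial.eval_mul, Polynomial.eval_add, Polynomial.eval_X,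
        Polynomial.eval_natCast]
      exact mul_pos ih (by positivity)

lemma eval_succ_right (a : ℝ) (n : ℕ) :
    (ascPochhammer ℝ (n+1)).eval a = (ascPochhammer ℝ n).eval a * (a + n) := by
  rw [ascPochhammer_succ_right]
  simp

lemma eval_succ_left (a : ℝ) (n : ℕ) :
    (ascPochhammer ℝ (n+1)).eval a = a * (ascPochhammer ℝ n).eval (a+1) := by
  rw [ascPochhammer_succ_left]
  simp [Polynomial.eval_comp]

lemma pc_succ {b : ℝ} (hb : 0 < b) (a : ℝ) (n : ℕ) :
    ((b + n) * ((n : ℝ) + 1)) * pc a b (n+1) = (a + n) * pc a b n := by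
  have hB := asc_pos hb n
  have hbn : (0:ℝ) < b + n := by positivity
  have hfn : ((n.factorial : ℝ)) ≠ 0 := Nat.cast_ne_zero.mpr n.factorial_ne_zero
  rw [pc, pc, eval_succ_right a n, eval_succ_right b n, Nat.factorial_succ]
  push_cast
  field_simp

lemma pc_shift {b : ℝ} (hb : 0 < b) (a : ℝ) (n : ℕ) :
    ((n:ℝ)+1) * pc a b (n+1) = (a / b) * pc (a+1) (b+1) n := by
  have hB := asc_pos (by linarith : (0:ℝ) < b+1) n
  have hfn : ((n.factorial : ℝ)) ≠ 0 := Nat.cast_ne_zero.mpr n.factorial_ne_zero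
  rw [pc, pc, eval_succ_left a n, eval_succ_left b n, Nat.factorial_succ]
  push_cast
  field_simp

lemma summable_pc {b : ℝ} (hb : 0 < b) (a x : ℝ) :
    Summable (fun n : ℕ => pc a b n * x ^ n) := by
  apply summable_of_ratio_norm_eventually_le (r := 1/2) (by norm_num)
  have h0 : Filter.Tendsto (fun n : ℕ => (|a|+1) * |x| / n) Filter.atTop (nhds 0) :=
    Filter.Tendsto.div_atTop tendsto_const_nhds tendsto_natCast_atTop_atTop
  filter_upwards [h0.eventually (gt_mem_nhds (by norm_num : (0:ℝ) < 1/2)),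
    Filter.eventually_ge_atTop 1] with n hn hn1
  have hn1' : (1:ℝ) ≤ (n:ℝ) := by exact_mod_cast hn1
  have hbn : (0:ℝ) < b + n := by positivity
  have hnn : (0:ℝ) < (n:ℝ) + 1 := by positivity
  have hterm : pc a b (n+1) * x^(n+1) = (pc a b n * x^n) * ((a+n) * x / ((b+n)*((n:ℝ)+1))) := by
    have h := pc_succ hb a n
    have hne : ((b + n) * ((n : ℝ) + 1)) ≠ 0 := by positivity
    field_simp
    linear_combination (x ^ n * x) * h
  rw [hterm, norm_mul, mul_comm]
  apply mul_le_mul_of_nonneg_right _ (norm_nonneg _)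
  rw [norm_div, norm_mul, Real.norm_eq_abs, Real.norm_eq_abs, Real.norm_eq_abs,
    abs_of_pos (by positivity : (0:ℝ) < (b+n)*((n:ℝ)+1))]
  have habs : |a + (n:ℝ)| ≤ |a| + n := by
    calc |a + (n:ℝ)| ≤ |a| + |(n:ℝ)| := abs_add_le a _
    _ = |a| + n := by rw [abs_of_nonneg (by positivity : (0:ℝ) ≤ (n:ℝ))]
  have hstep : |a + (n:ℝ)| * |x| / ((b+n)*((n:ℝ)+1)) ≤ (|a|+1) * |x| / n := by
    rw [div_le_div_iff₀ (by positivity) (by linarith)]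
    have hx0 := abs_nonneg x
    have ha0 := abs_nonneg a
    have hn0 : (0:ℝ) ≤ (n:ℝ) := by linarith
    have h1 : |a + (n:ℝ)| * (|x| * n) ≤ (|a| + n) * (|x| * n) :=
      mul_le_mul_of_nonneg_right habs (mul_nonneg hx0 hn0)
    have hsc : (|a| + (n:ℝ)) * (n:ℝ) ≤ (|a|+1) * ((b+n)*((n:ℝ)+1)) := by
      nlinarith [mul_nonneg ha0 hn0, mul_pos hb hnn, mul_nonneg (mul_nonneg ha0 hn0) hn0]
    have h2 : (|a| + (n:ℝ)) * (n:ℝ) * |x| ≤ (|a|+1) * ((b+n)*((n:ℝ)+1)) * |x| :=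
      mul_le_mul_of_nonneg_right hsc hx0
    nlinarith
  linarith

lemma phi_ball {b : ℝ} (hb : 0 < b) (a : ℝ) :
    HasFPowerSeriesOnBall (Phi a b) (FormalMultilinearSeries.ofScalars ℝ (pc a b)) 0 ⊤ := by
  have hrad : (FormalMultilinearSeries.ofScalars ℝ (pc a b)).radius = ⊤ := by
    apply FormalMultilinearSeries.radius_eq_top_of_summable_norm
    intro r
    have hs := (summable_pc hb a (r:ℝ)).abs
    apply hs.congr
    intro n
    rw [FormalMultilinearSeries.ofScalars_norm, abs_mul, abs_pow,
      abs_of_nonneg r.coe_nonneg, Real.norm_eq_abs]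
  have hfun : Phi a b = (FormalMultilinearSeries.ofScalars ℝ (pc a b)).sum := by
    funext y
    rw [Phi_eq, FormalMultilinearSeries.sum]
    exact (tsum_congr fun n => by
      rw [FormalMultilinearSeries.ofScalars_apply_eq, smul_eq_mul]).symm
  rw [hfun]
  have h := (FormalMultilinearSeries.ofScalars ℝ (pc a b)).hasFPowerSeriesOnBall
    (by rw [hrad]; exact ENNReal.zero_lt_top)
  rwa [hrad] at h

lemma phi_continuous {b : ℝ} (hb : 0 < b) (a : ℝ) : Continuous (Phi a b) := by
  rw [← continuousOn_univ, ← Metric.emetric_ball_top (0:ℝ)]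
  exact (phi_ball hb a).continuousOn

lemma phi_hasSum {b : ℝ} (hb : 0 < b) (a x : ℝ) :
    HasSum (fun n : ℕ => pc a b n * x ^ n) (Phi a b x) := by
  rw [Phi_eq]
  exact (summable_pc hb a x).hasSum

lemma phi_hasSum_shift {b : ℝ} (hb : 0 < b) (a x : ℝ) :
    HasSum (fun n : ℕ => ((n:ℝ)+1) * pc a b (n+1) * x ^ n) (a / b * Phi (a+1) (b+1) x) := by
  have h := (phi_hasSum (by linarith : (0:ℝ) < b+1) (a+1) x).mul_left (a/b)
  have he : (fun n : ℕ => ((n:ℝ)+1) * pc a b (n+1) * x ^ n)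
      = fun n : ℕ => (a/b) * (pc (a+1) (b+1) n * x ^ n) := by
    funext n
    rw [← mul_assoc, ← pc_shift hb]
  rw [he]
  exact h

lemma phi_hasDerivAt {b : ℝ} (hb : 0 < b) (a : ℝ) {x : ℝ} (hx : x ≠ 0) :
    HasDerivAt (Phi a b) (a / b * Phi (a+1) (b+1) x) x := by
  have hball := phi_ball hb a
  have hmem : x ∈ Metric.eball (0:ℝ) ⊤ := by
    rw [Metric.emetric_ball_top]; trivial
  have hdiff : DifferentiableAt ℝ (Phi a b) x := by
    have h := hball.differentiableOn
    rw [Metric.emetric_ball_top] at h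
    exact h.differentiableAt Filter.univ_mem
  have hs := hball.fderiv.hasSum hmem
  have hs2 := (ContinuousLinearMap.apply ℝ ℝ x).hasSum hs
  simp only [ContinuousLinearMap.apply_apply,
    FormalMultilinearSeries.derivSeries_apply_diag] at hs2
  have hterm : (fun n : ℕ => (n+1) • ((FormalMultilinearSeries.ofScalars ℝ (pc a b)) (n+1)
        fun _ => x))
      = fun n : ℕ => x * (((n:ℝ)+1) * pc a b (n+1) * x ^ n) := by
    funext n
    rw [FormalMultilinearSeries.ofScalars_apply_eq]
    push_cast [nsmul_eq_mul, smul_eq_mul]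
    ring
  rw [hterm] at hs2
  have hs3 := (phi_hasSum_shift hb a x).mul_left x
  have hkey := hs2.unique hs3
  have hxx : (fderiv ℝ (Phi a b) (0 + x)) x = x * deriv (Phi a b) x := by
    rw [zero_add, ← fderiv_apply_one_eq_deriv]
    calc (fderiv ℝ (Phi a b) x) x = (fderiv ℝ (Phi a b) x) (x • 1) := by
          rw [smul_eq_mul, mul_one]
      _ = x • (fderiv ℝ (Phi a b) x) 1 := (fderiv ℝ (Phi a b) x).map_smul x 1
      _ = x * (fderiv ℝ (Phi a b) x) 1 := by rw [smul_eq_mul]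
  rw [hxx] at hkey
  have hd : deriv (Phi a b) x = a / b * Phi (a+1) (b+1) x := mul_left_cancel₀ hx hkey
  rw [← hd]
  exact hdiff.hasDerivAt

lemma hasSum_shift_down {F : ℕ → ℝ} {a : ℝ} (h : HasSum (fun n => F (n+1)) a)
    (h0 : F 0 = 0) : HasSum F a := by
  have h2 := (hasSum_nat_add_iff (f := F) 1).mp h
  simpa [h0] using h2

lemma phi_ode {b : ℝ} (hb : 0 < b) (ν x : ℝ) :
    x * (ν/b * ((ν+1)/(b+1) * Phi (ν+2) (b+2) x))
      + (b - x) * (ν/b * Phi (ν+1) (b+1) x) - ν * Phi ν b x = 0 := by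
  have hb1 : (0:ℝ) < b + 1 := by linarith
  have S1 := phi_hasSum_shift hb ν x
  have S2 := phi_hasSum_shift hb1 (ν+1) x
  rw [show ν+1+1 = ν+2 by ring, show b+1+1 = b+2 by ring] at S2
  -- x * f'' sum reindexed
  have T2 := (S2.mul_left (ν/b)).mul_left x
  have e2 : (fun n : ℕ => x * ((ν/b) * (((n:ℝ)+1) * pc (ν+1) (b+1) (n+1) * x ^ n)))
      = fun n : ℕ => ((n:ℝ)+1)*((n:ℝ)+2) * pc ν b (n+2) * x ^ (n+1) := by
    funext n
    have h : ((n:ℝ)+1+1) * pc ν b (n+2) = (ν / b) * pc (ν+1) (b+1) (n+1) := by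
      have := pc_shift hb ν (n+1)
      push_cast at this
      exact this
    linear_combination (-(((n:ℝ)+1) * x ^ (n+1))) * h
  rw [e2] at T2
  have L2 : HasSum (fun n : ℕ => (n:ℝ)*((n:ℝ)+1) * pc ν b (n+1) * x ^ n)
      (x * (ν/b * ((ν+1)/(b+1) * Phi (ν+2) (b+2) x))) := by
    apply hasSum_shift_down _ (by simp)
    have he : (fun n : ℕ => (((n+1:ℕ)):ℝ)*(((n+1:ℕ):ℝ)+1) * pc ν b ((n+1)+1) * x ^ (n+1))
        = fun n : ℕ => ((n:ℝ)+1)*((n:ℝ)+2) * pc ν b (n+2) * x ^ (n+1) := by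
      funext n
      rw [show (n+1)+1 = n+2 from rfl]
      push_cast
      ring
    rw [he]
    exact T2
  have L1 : HasSum (fun n : ℕ => (n:ℝ) * pc ν b n * x ^ n)
      (x * (ν/b * Phi (ν+1) (b+1) x)) := by
    apply hasSum_shift_down _ (by simp)
    have he : (fun n : ℕ => (((n+1:ℕ)):ℝ) * pc ν b (n+1) * x ^ (n+1))
        = fun n : ℕ => x * (((n:ℝ)+1) * pc ν b (n+1) * x ^ n) := by
      funext n
      push_cast
      ring
    rw [he]
    exact S1.mul_left x
  have hL := L2.add (S1.mul_left b)
  have hR := L1.add ((phi_hasSum hb ν x).mul_left ν)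
  have hfun : (fun n : ℕ => (n:ℝ)*((n:ℝ)+1) * pc ν b (n+1) * x ^ n
        + b * (((n:ℝ)+1) * pc ν b (n+1) * x ^ n))
      = fun n : ℕ => (n:ℝ) * pc ν b n * x ^ n + ν * (pc ν b n * x ^ n) := by
    funext n
    linear_combination (x ^ n) * pc_succ hb ν n
  rw [hfun] at hL
  have hkey := hL.unique hR
  linear_combination hkey

noncomputable def FF (ν b : ℝ) (t : ℝ) : ℝ :=
  Real.exp (-t) * (2 * t ^ (b+1) * (ν/b * Phi (ν+1) (b+1) t) ^ 2
    + 2*(b-1) * t ^ b * Phi ν b t * (ν/b * Phi (ν+1) (b+1) t)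
    - 2 * t ^ (b+1) * (Phi ν b t * (ν/b * Phi (ν+1) (b+1) t))
    + (1-2*ν) * t ^ b * Phi ν b t ^ 2)

lemma FF_hasDerivAt {b ν : ℝ} (hb : 0 < b) {t : ℝ} (ht : 0 < t) :
    HasDerivAt (FF ν b)
      (((b - 2*ν) * t ^ (b-1) - t ^ b) * (Real.exp (-t) * Phi ν b t ^ 2)) t := by
  have hb1 : (0:ℝ) < b + 1 := by linarith
  have hne : t ≠ 0 := ne_of_gt ht
  have hfd : HasDerivAt (Phi ν b) (ν/b * Phi (ν+1) (b+1) t) t := phi_hasDerivAt hb ν hne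
  have hgd0 : HasDerivAt (Phi (ν+1) (b+1)) ((ν+1)/(b+1) * Phi (ν+1+1) (b+1+1) t) t :=
    phi_hasDerivAt hb1 (ν+1) hne
  rw [show ν+1+1 = ν+2 by ring, show b+1+1 = b+2 by ring] at hgd0
  have hgd : HasDerivAt (fun s => ν/b * Phi (ν+1) (b+1) s)
      (ν/b * ((ν+1)/(b+1) * Phi (ν+2) (b+2) t)) t := hgd0.const_mul (ν/b)
  have hp1 : HasDerivAt (fun s : ℝ => s ^ (b+1)) ((b+1) * t ^ b) t := by
    have h := Real.hasDerivAt_rpow_const (x := t) (p := b+1) (Or.inl hne)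
    rwa [show b+1-1 = b by ring] at h
  have hp2 : HasDerivAt (fun s : ℝ => s ^ b) (b * t ^ (b-1)) t :=
    Real.hasDerivAt_rpow_const (x := t) (p := b) (Or.inl hne)
  have hexp : HasDerivAt (fun s : ℝ => Real.exp (-s)) (-Real.exp (-t)) t := by
    have h := (hasDerivAt_neg' (x := t)).exp
    rwa [mul_neg_one] at h
  have h1 := (hp1.const_mul 2).mul (hgd.pow 2)
  have h2 := ((hp2.const_mul (2*(b-1))).mul hfd).mul hgd
  have h3 := (hp1.const_mul 2).mul (hfd.mul hgd)
  have h4 := (hp2.const_mul (1-2*ν)).mul (hfd.pow 2)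
  have hbig := hexp.mul (((h1.add h2).sub h3).add h4)
  refine hbig.congr_deriv ?_
  simp only [Pi.mul_apply, Pi.pow_apply, Pi.add_apply, Pi.sub_apply]
  have hode := phi_ode hb ν t
  have hh2 : ν/b * ((ν+1)/(b+1) * Phi (ν+2) (b+2) t)
      = (ν * Phi ν b t - (b - t) * (ν/b * Phi (ν+1) (b+1) t)) / t := by
    rw [eq_div_iff hne]
    linear_combination hode
  rw [hh2]
  have e2 : t ^ (b+1) = t ^ b * t := Real.rpow_add_one hne b
  have e1 : t ^ b = t ^ (b-1) * t := by
    have h := Real.rpow_add_one hne (b-1)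
    rwa [show b-1+1 = b by ring] at h
  rw [e2, e1]
  have hb0 : b ≠ 0 := ne_of_gt hb
  field_simp
  linear_combination (4*t*ν^2*b*Phi (ν+1) (b+1) t*Phi ν b t - 4*t*ν^2*b*Phi (ν+1) (b+1) t^2
    + 4*t^2*ν^2*Phi (ν+1) (b+1) t^2) * mul_inv_cancel₀ hb0

end PhiAux

open PhiAux in

theorem stmt13 (b z ν : ℝ) (hb : 0 < b) (hz : 0 < z) (hν : ν < 0)
    (hzero : Phi ν b z = 0) :
    (2 * ν ^ 2 * Real.exp (-z) * z ^ (b + 1) / (b ^ 2 * (b - 2 * ν))) *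
        (Phi (ν + 1) (b + 1) z) ^ 2 ≤
      ∫ t in (0 : ℝ)..z, t ^ (b - 1) * Real.exp (-t) * (Phi ν b t) ^ 2 := by
  have hb1 : (0:ℝ) < b + 1 := by linarith
  have hbν : (0:ℝ) < b - 2*ν := by linarith
  have hcontf : Continuous (Phi ν b) := phi_continuous hb ν
  have hcontg : Continuous (Phi (ν+1) (b+1)) := phi_continuous hb1 (ν+1)
  have hcontE : Continuous (fun t : ℝ => Real.exp (-t) * Phi ν b t ^ 2) :=
    (Real.continuous_exp.comp continuous_neg).mul (hcontf.pow 2)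
  have crp : ∀ p : ℝ, 0 < p → ContinuousOn (fun s : ℝ => s ^ p) (Set.Icc 0 z) :=
    fun p hp s _ => (Real.continuousAt_rpow_const s p (Or.inr hp.le)).continuousWithinAt
  have c1 : ContinuousOn (fun s : ℝ => s ^ b) (Set.Icc 0 z) := crp b hb
  have c2 : ContinuousOn (fun s : ℝ => s ^ (b+1)) (Set.Icc 0 z) := crp (b+1) hb1
  have cf : ContinuousOn (Phi ν b) (Set.Icc 0 z) := hcontf.continuousOn
  have cg : ContinuousOn (fun s : ℝ => ν/b * Phi (ν+1) (b+1) s) (Set.Icc 0 z) :=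
    (hcontg.continuousOn).const_smul (ν/b) |>.congr (fun s _ => by simp [smul_eq_mul])
  have hICf : ContinuousOn (FF ν b) (Set.Icc 0 z) := by
    unfold FF
    apply ContinuousOn.mul ((Real.continuous_exp.comp continuous_neg).continuousOn)
    exact ((((continuousOn_const.mul c2).mul (cg.pow 2)).add
        ((((continuousOn_const.mul c1).mul cf)).mul cg)).sub
        ((continuousOn_const.mul c2).mul (cf.mul cg))).add
        ((continuousOn_const.mul c1).mul (cf.pow 2))
  have ia : IntervalIntegrable (fun t : ℝ => t ^ (b-1) * (Real.exp (-t) * Phi ν b t ^ 2))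
      MeasureTheory.volume 0 z :=
    (intervalIntegral.intervalIntegrable_rpow' (by linarith)).mul_continuousOn
      hcontE.continuousOn
  have ib : IntervalIntegrable (fun t : ℝ => t ^ b * (Real.exp (-t) * Phi ν b t ^ 2))
      MeasureTheory.volume 0 z :=
    (intervalIntegral.intervalIntegrable_rpow' (by linarith)).mul_continuousOn
      hcontE.continuousOn
  have hint : IntervalIntegrable
      (fun t : ℝ => ((b - 2*ν) * t ^ (b-1) - t ^ b) * (Real.exp (-t) * Phi ν b t ^ 2))
      MeasureTheory.volume 0 z :=
    (((intervalIntegral.intervalIntegrable_rpow' (by linarith)).const_mul (b-2*ν)).sub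
      (intervalIntegral.intervalIntegrable_rpow' (by linarith))).mul_continuousOn
      hcontE.continuousOn
  have key : (∫ t in (0:ℝ)..z,
        ((b - 2*ν) * t ^ (b-1) - t ^ b) * (Real.exp (-t) * Phi ν b t ^ 2))
      = FF ν b z - FF ν b 0 :=
    intervalIntegral.integral_eq_sub_of_hasDerivAt_of_le hz.le hICf
      (fun t htt => FF_hasDerivAt hb htt.1) hint
  have hFz : FF ν b z = Real.exp (-z) * (2 * z ^ (b+1) * (ν/b * Phi (ν+1) (b+1) z) ^ 2) := by
    unfold FF
    rw [hzero]
    ring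
  have hF0 : FF ν b 0 = 0 := by
    unfold FF
    rw [Real.zero_rpow (ne_of_gt hb1), Real.zero_rpow (ne_of_gt hb)]
    ring
  have hsplit : (∫ t in (0:ℝ)..z,
        ((b - 2*ν) * t ^ (b-1) - t ^ b) * (Real.exp (-t) * Phi ν b t ^ 2))
      = (b - 2*ν) * (∫ t in (0:ℝ)..z, t ^ (b-1) * (Real.exp (-t) * Phi ν b t ^ 2))
        - ∫ t in (0:ℝ)..z, t ^ b * (Real.exp (-t) * Phi ν b t ^ 2) := by
    have hpt : ∀ t : ℝ, ((b - 2*ν) * t ^ (b-1) - t ^ b) * (Real.exp (-t) * Phi ν b t ^ 2)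
        = (b - 2*ν) * (t ^ (b-1) * (Real.exp (-t) * Phi ν b t ^ 2))
          - t ^ b * (Real.exp (-t) * Phi ν b t ^ 2) := fun t => by ring
    simp_rw [hpt]
    rw [intervalIntegral.integral_sub (ia.const_mul (b-2*ν)) ib,
      intervalIntegral.integral_const_mul]
  have hI2 : 0 ≤ ∫ t in (0:ℝ)..z, t ^ b * (Real.exp (-t) * Phi ν b t ^ 2) := by
    apply intervalIntegral.integral_nonneg hz.le
    intro u hu
    have h1 : (0:ℝ) ≤ u ^ b := Real.rpow_nonneg hu.1 b
    positivity
  have hgoalI : (∫ t in (0:ℝ)..z, t ^ (b - 1) * Real.exp (-t) * Phi ν b t ^ 2)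
      = ∫ t in (0:ℝ)..z, t ^ (b-1) * (Real.exp (-t) * Phi ν b t ^ 2) := by
    simp_rw [mul_assoc]
  rw [hgoalI]
  set I1 := ∫ t in (0:ℝ)..z, t ^ (b-1) * (Real.exp (-t) * Phi ν b t ^ 2) with hI1def
  set I2 := ∫ t in (0:ℝ)..z, t ^ b * (Real.exp (-t) * Phi ν b t ^ 2) with hI2def
  have heq : (b - 2*ν) * I1 - I2
      = Real.exp (-z) * (2 * z ^ (b+1) * (ν/b * Phi (ν+1) (b+1) z) ^ 2) := by
    rw [← hsplit, key, hFz, hF0, sub_zero]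
  have hcancel : b^2 * (ν/b * Phi (ν+1) (b+1) z) ^ 2 = ν^2 * (Phi (ν+1) (b+1) z) ^ 2 := by
    field_simp
  have heq3 : b^2 * ((b - 2*ν) * I1 - I2)
      = Real.exp (-z) * (2 * z ^ (b+1) * (ν^2 * (Phi (ν+1) (b+1) z) ^ 2)) := by
    linear_combination (b^2) * heq + (Real.exp (-z) * (2 * z ^ (b+1))) * hcancel
  rw [div_mul_eq_mul_div, div_le_iff₀ (by positivity)]
  nlinarith [heq3, mul_nonneg (sq_nonneg b) hI2]
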